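/- The dispersionless Hamilton–Jacobi equation of the two-dimensional Schrödinger operator: if both mixed dispersionless Hirota equations hold, i.e. p(λ) − C_1(μ) = (p(λ) + C_1(μ))·E_×(λ,μ) and p̄(μ) − B_1(λ) = (p̄(μ) + B_1(λ))·E_×(λ,μ) as identities of formal series in λ^{−1}, μ^{−1} with coefficients in R, then p(z)·B_1(z) = u and C_1(z)·p̄(z) = u as identities in R((z^{−1})), where u = −2∂_1∂̄_1F; that is, both products ∂_{t_1}S(z)·∂_{t̄_1}S(z) and ∂_{t_1}S̄(z)·∂_{t̄_1}S̄(z) are independent of z and equal to the constant u. -/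

import Mathlib

noncomputable section

/-- The series `h ∈ R[w][[z⁻¹]]` with `(p(z) − w)/z = 1 + h`, for
`p(z) = z + Σ_{j≥1} c_j z^{−j}`; the power series variable is `u = z⁻¹`. -/
def hSer {R : Type*} [CommRing R] (c : ℕ → R) : PowerSeries (Polynomial R) :=
  PowerSeries.mk fun k =>
    if k = 0 then 0 else if k = 1 then -Polynomial.X else Polynomial.C (c (k - 1))

/-- `log (1 + h) = Σ_{k≥1} (−1)^{k−1} h^k / k`, defined coefficientwise. -/
def logOneAdd {A : Type*} [CommRing A] [Algebra ℚ A] (h : PowerSeries A) : PowerSeries A :=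
  PowerSeries.mk fun m =>
    ∑ k ∈ Finset.Icc 1 m, ((-1 : ℚ) ^ (k - 1) * (k : ℚ)⁻¹) • PowerSeries.coeff m (h ^ k)

/-- `Φ` is the family of Faber polynomials of `p(z) = z + Σ_{j≥1} c_j z^{−j}`, i.e.
`log ((p(z) − w)/z) = − Σ_{n≥1} (z^{−n}/n) Φ_n(w)` in `R[w][[z⁻¹]]`. -/
def FaberRel {R : Type*} [CommRing R] [Algebra ℚ R] (c : ℕ → R) (Φ : ℕ → Polynomial R) : Prop :=
  logOneAdd (hSer c) = PowerSeries.mk fun n => if n = 0 then 0 else (-(n : ℚ)⁻¹) • Φ n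

/-- The coefficient family of the generating series of second derivatives of `F`:
`gen2 Dout Din F m` is the coefficient of `z^{-j}` in
`− Σ_{n≥0} (2 z^{−2n−1}/(2n+1)) ∂ᵒᵘᵗ_{2n+1} ∂ⁱⁿ_{2m+1} F`. -/
def gen2 {R : Type*} [CommRing R] [Algebra ℚ R]
    (Dout Din : ℕ → Derivation ℚ R R) (F : R) (m : ℕ) : ℕ → R :=
  fun j => if j % 2 = 1 then ((-2 : ℚ) * (j : ℚ)⁻¹) • Dout (j / 2) (Din m F) else 0

/-- `p(z) = z − Σ_{n≥0} (2 z^{−2n−1}/(2n+1)) ∂_{2n+1}∂_1 F` as a formal Laurent series in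
`z⁻¹` (the Hahn series exponent `k` records the power `z^{-k}`). -/
def pzH {R : Type*} [CommRing R] [Algebra ℚ R]
    (D : ℕ → Derivation ℚ R R) (F : R) : HahnSeries ℤ R :=
  HahnSeries.single (-1 : ℤ) 1 +
    HahnSeries.ofPowerSeries ℤ R (PowerSeries.mk (gen2 D D F 0))

/-- The ring of formal series in `λ⁻¹, μ⁻¹` (with finitely many positive powers of `λ, μ`)
with coefficients in `R`: the outer exponent is the power of `λ⁻¹`, the inner one the
power of `μ⁻¹`. -/
abbrev W2 (R : Type*) [CommRing R] : Type _ := HahnSeries ℤ (HahnSeries ℤ R)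

/-- `λ` as an element of `W2 R`. -/
def lamW2 (R : Type*) [CommRing R] : W2 R := HahnSeries.single (-1 : ℤ) 1

/-- `μ` as an element of `W2 R`. -/
def muW2 (R : Type*) [CommRing R] : W2 R := HahnSeries.C (HahnSeries.single (-1 : ℤ) (1 : R))

/-- A series `Σ_{k≥0} a_k λ^{-k}` as an element of `W2 R`. -/
def lSer {R : Type*} [CommRing R] (a : ℕ → R) : W2 R :=
  HahnSeries.ofPowerSeries ℤ (HahnSeries ℤ R)
    (PowerSeries.mk fun k => HahnSeries.C (a k))

/-- A series `Σ_{l≥0} a_l μ^{-l}` as an element of `W2 R`. -/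
def mSer {R : Type*} [CommRing R] (a : ℕ → R) : W2 R :=
  HahnSeries.C (HahnSeries.ofPowerSeries ℤ R (PowerSeries.mk a))

/-- A double power series in `λ⁻¹, μ⁻¹` as an element of `W2 R`. -/
def toW2 {R : Type*} [CommRing R] (f : PowerSeries (PowerSeries R)) : W2 R :=
  HahnSeries.ofPowerSeries ℤ (HahnSeries ℤ R)
    (PowerSeries.map (HahnSeries.ofPowerSeries ℤ R) f)

/-- The exponential `exp G = Σ_{k≥0} G^k/k!` of a power series with zero constant term,
defined coefficientwise. -/
def expPS {A : Type*} [CommRing A] [Algebra ℚ A] (G : PowerSeries A) : PowerSeries A :=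
  PowerSeries.mk fun a =>
    ∑ k ∈ Finset.range (a + 1), ((k.factorial : ℚ))⁻¹ • PowerSeries.coeff a (G ^ k)

/-- The argument `4 Σ_{n,m≥0} (λ^{−2n−1}μ^{−2m−1}/((2n+1)(2m+1))) ∂ᵒᵘᵗ_{2n+1}∂ⁱⁿ_{2m+1} F`
of the dispersionless Hirota exponential, as a power series in `λ⁻¹` (outer index) with
coefficients in `R[[μ⁻¹]]`. -/
def Earg {R : Type*} [CommRing R] [Algebra ℚ R]
    (Dout Din : ℕ → Derivation ℚ R R) (F : R) : PowerSeries (PowerSeries R) :=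
  PowerSeries.mk fun i =>
    if i % 2 = 1 then
      PowerSeries.mk fun j =>
        if j % 2 = 1 then ((4 : ℚ) * ((i : ℚ) * (j : ℚ))⁻¹) • Dout (i / 2) (Din (j / 2) F)
        else 0
    else 0

/-- `E(λ,μ) = exp (4 Σ_{n,m≥0} (λ^{−2n−1}μ^{−2m−1}/((2n+1)(2m+1))) ∂ᵒᵘᵗ_{2n+1}∂ⁱⁿ_{2m+1} F)`
as an element of `W2 R`. -/
def EW {R : Type*} [CommRing R] [Algebra ℚ R]
    (Dout Din : ℕ → Derivation ℚ R R) (F : R) : W2 R :=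
  toW2 (expPS (Earg Dout Din F))

/-- `p(λ)` as an element of `W2 R`. -/
def pLamW {R : Type*} [CommRing R] [Algebra ℚ R]
    (D : ℕ → Derivation ℚ R R) (F : R) : W2 R :=
  lamW2 R + lSer (gen2 D D F 0)

section Aux

variable {R : Type*} [CommRing R]

lemma ofPS_coeff_neg (p : PowerSeries R) {g : ℤ} (hg : g < 0) :
    (HahnSeries.ofPowerSeries ℤ R p).coeff g = 0 := by
  rw [HahnSeries.ofPowerSeries_apply, HahnSeries.embDomain_notin_range]
  rintro ⟨n, hn⟩
  simp only [Function.Embedding.coeFn_mk, RelEmbedding.coe_mk, Function.Embedding.coe_subtype, Nat.castOrderEmbedding_apply] at hn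
  omega

lemma map_ofPS {S : Type*} [CommRing S] (f : R →+* S) (p : PowerSeries R) :
    (HahnSeries.ofPowerSeries ℤ R p).map f
      = HahnSeries.ofPowerSeries ℤ S (p.map f) := by
  ext g
  rcases lt_or_ge g 0 with hg | hg
  · rw [HahnSeries.map_coeff, ofPS_coeff_neg p hg, ofPS_coeff_neg _ hg, map_zero]
  · obtain ⟨n, rfl⟩ : ∃ n : ℕ, g = (n : ℤ) := ⟨g.toNat, (Int.toNat_of_nonneg hg).symm⟩
    rw [HahnSeries.map_coeff, HahnSeries.ofPowerSeries_apply_coeff,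
      HahnSeries.ofPowerSeries_apply_coeff, PowerSeries.coeff_map]

lemma half_eq {M : Type*} [AddCommGroup M] [Module ℚ M] {x y : M}
    (h : x + x = y + y) : x = y := by
  have h2 : (2 : ℚ) • x = (2 : ℚ) • y := by rw [two_smul ℚ x, two_smul ℚ y]; exact h
  calc x = (2⁻¹ : ℚ) • ((2 : ℚ) • x) := by rw [smul_smul]; norm_num
    _ = (2⁻¹ : ℚ) • ((2 : ℚ) • y) := by rw [h2]
    _ = y := by rw [smul_smul]; norm_num

lemma hmap_add (x y : HahnSeries ℤ R) :
    (x + y).map (HahnSeries.C : R →+* HahnSeries ℤ R)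
      = x.map (HahnSeries.C : R →+* HahnSeries ℤ R)
        + y.map (HahnSeries.C : R →+* HahnSeries ℤ R) :=
  HahnSeries.map_add (HahnSeries.C : R →+* HahnSeries ℤ R).toAddMonoidHom

lemma hmap_mul (x y : HahnSeries ℤ R) :
    (x * y).map (HahnSeries.C : R →+* HahnSeries ℤ R)
      = x.map (HahnSeries.C : R →+* HahnSeries ℤ R)
        * y.map (HahnSeries.C : R →+* HahnSeries ℤ R) :=
  HahnSeries.map_mul (HahnSeries.C : R →+* HahnSeries ℤ R).toNonUnitalRingHom

lemma hmap_single (a : ℤ) (r : R) :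
    (HahnSeries.single a r).map (HahnSeries.C : R →+* HahnSeries ℤ R)
      = HahnSeries.single a (HahnSeries.C r) := by
  ext g
  by_cases h : g = a
  · subst h
    rw [HahnSeries.map_coeff, HahnSeries.coeff_single_same, HahnSeries.coeff_single_same]
  · rw [HahnSeries.map_coeff, HahnSeries.coeff_single_of_ne h,
      HahnSeries.coeff_single_of_ne h, map_zero]

lemma lSer_eq_map (a : ℕ → R) :
    lSer a = (HahnSeries.ofPowerSeries ℤ R (PowerSeries.mk a)).map
      (HahnSeries.C : R →+* HahnSeries ℤ R) := by
  rw [map_ofPS, lSer]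
  have : (PowerSeries.mk a).map (HahnSeries.C : R →+* HahnSeries ℤ R)
      = PowerSeries.mk fun k => HahnSeries.C (a k) := by
    ext n
    rw [PowerSeries.coeff_map, PowerSeries.coeff_mk, PowerSeries.coeff_mk]
  rw [this]

end Aux

lemma pLamW_eq_map {R : Type*} [CommRing R] [Algebra ℚ R]
    (D : ℕ → Derivation ℚ R R) (F : R) :
    pLamW D F = (pzH D F).map (HahnSeries.C : R →+* HahnSeries ℤ R) := by
  rw [pzH, pLamW, hmap_add, hmap_single, map_one, lSer_eq_map, lamW2]
theorem stmt14 {R : Type*} [CommRing R] [Algebra ℚ R]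
    (D Db : ℕ → Derivation ℚ R R)
    (hDD : ∀ n m (x : R), D n (D m x) = D m (D n x))
    (hDDb : ∀ n m (x : R), D n (Db m x) = Db m (D n x))
    (hDbDb : ∀ n m (x : R), Db n (Db m x) = Db m (Db n x)) (F : R)
    (h1 : pLamW D F - mSer (gen2 Db D F 0)
        = (pLamW D F + mSer (gen2 Db D F 0)) * EW D Db F)
    (h2 : HahnSeries.C (pzH Db F) - lSer (gen2 D Db F 0)
        = (HahnSeries.C (pzH Db F) + lSer (gen2 D Db F 0)) * EW D Db F) :
    pzH D F * HahnSeries.ofPowerSeries ℤ R (PowerSeries.mk (gen2 D Db F 0))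
        = HahnSeries.C ((-2 : ℚ) • D 0 (Db 0 F)) ∧
    HahnSeries.ofPowerSeries ℤ R (PowerSeries.mk (gen2 Db D F 0)) * pzH Db F
        = HahnSeries.C ((-2 : ℚ) • D 0 (Db 0 F)) := by
  classical
  set b := gen2 D Db F 0 with hbdef
  set c := gen2 Db D F 0 with hcdef
  set X := pzH D F * HahnSeries.ofPowerSeries ℤ R (PowerSeries.mk b) with hXdef
  set Y := HahnSeries.ofPowerSeries ℤ R (PowerSeries.mk c) * pzH Db F with hYdef
  -- from the two Hirota equations, a purely algebraic identity
  have key : pLamW D F * lSer b + pLamW D F * lSer b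
      = mSer c * HahnSeries.C (pzH Db F) + mSer c * HahnSeries.C (pzH Db F) := by
    have e1 : (pLamW D F - mSer c) * (HahnSeries.C (pzH Db F) + lSer b)
        = ((pLamW D F + mSer c) * EW D Db F) * (HahnSeries.C (pzH Db F) + lSer b) := by
      rw [h1]
    have e2 : (HahnSeries.C (pzH Db F) - lSer b) * (pLamW D F + mSer c)
        = ((HahnSeries.C (pzH Db F) + lSer b) * EW D Db F) * (pLamW D F + mSer c) := by
      rw [h2]
    have e3 : (pLamW D F - mSer c) * (HahnSeries.C (pzH Db F) + lSer b)
        = (HahnSeries.C (pzH Db F) - lSer b) * (pLamW D F + mSer c) := by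
      rw [e1, e2]; ring
    have e5 : (pLamW D F * lSer b + pLamW D F * lSer b)
        - (mSer c * HahnSeries.C (pzH Db F) + mSer c * HahnSeries.C (pzH Db F))
        = (pLamW D F - mSer c) * (HahnSeries.C (pzH Db F) + lSer b)
          - (HahnSeries.C (pzH Db F) - lSer b) * (pLamW D F + mSer c) := by
      ring
    exact sub_eq_zero.mp (e5.trans (sub_eq_zero_of_eq e3))
  have keq : pLamW D F * lSer b = mSer c * HahnSeries.C (pzH Db F) := half_eq key
  -- rewrite both sides as coefficientwise images
  have hX : X.map (HahnSeries.C : R →+* HahnSeries ℤ R) = HahnSeries.C Y := by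
    rw [hXdef, hmap_mul, ← pLamW_eq_map, ← lSer_eq_map, keq, hYdef]
    have hm : mSer c = HahnSeries.C (HahnSeries.ofPowerSeries ℤ R (PowerSeries.mk c)) := rfl
    rw [hm, ← map_mul]
  -- the constant value
  have hb1 : PowerSeries.coeff 1 (PowerSeries.mk b) = (-2 : ℚ) • D 0 (Db 0 F) := by
    rw [PowerSeries.coeff_mk, hbdef]
    simp [gen2]
  have hX0 : X.coeff 0 = (-2 : ℚ) • D 0 (Db 0 F) := by
    rw [hXdef, pzH, add_mul, HahnSeries.coeff_add]
    have t1 : ((HahnSeries.single (-1 : ℤ) (1 : R)) *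
        HahnSeries.ofPowerSeries ℤ R (PowerSeries.mk b)).coeff 0
        = (-2 : ℚ) • D 0 (Db 0 F) := by
      have h' : ((HahnSeries.single (-1 : ℤ) (1 : R)) *
          HahnSeries.ofPowerSeries ℤ R (PowerSeries.mk b)).coeff ((1 : ℤ) + (-1 : ℤ))
          = 1 * (HahnSeries.ofPowerSeries ℤ R (PowerSeries.mk b)).coeff (1 : ℤ) :=
        HahnSeries.coeff_single_mul_add
      norm_num at h'
      rw [h']
      have h1c : ((1 : ℤ)) = ((1 : ℕ) : ℤ) := rfl
      rw [h1c, HahnSeries.ofPowerSeries_apply_coeff, hb1]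
    have t2 : ((HahnSeries.ofPowerSeries ℤ R (PowerSeries.mk (gen2 D D F 0))) *
        HahnSeries.ofPowerSeries ℤ R (PowerSeries.mk b)).coeff 0 = 0 := by
      rw [← map_mul]
      have h0c : ((0 : ℤ)) = ((0 : ℕ) : ℤ) := rfl
      rw [h0c, HahnSeries.ofPowerSeries_apply_coeff]
      have hcc : PowerSeries.constantCoeff
          (PowerSeries.mk (gen2 D D F 0) * PowerSeries.mk b) = 0 := by
        rw [map_mul]
        have : PowerSeries.constantCoeff (PowerSeries.mk (gen2 D D F 0)) = 0 := by
          simp [gen2]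
        rw [this, zero_mul]
      simpa using hcc
    rw [t1, t2, add_zero]
  -- extract coefficients
  have hcoeff : ∀ g : ℤ, HahnSeries.C (X.coeff g) = (HahnSeries.C Y).coeff g := by
    intro g
    rw [← hX, HahnSeries.map_coeff]
  have hYval : Y = HahnSeries.C ((-2 : ℚ) • D 0 (Db 0 F)) := by
    have h0 := hcoeff 0
    simp only [HahnSeries.C_apply, HahnSeries.coeff_single_same] at h0
    rw [HahnSeries.C_apply, ← h0, hX0]
  have hXval : X = HahnSeries.C ((-2 : ℚ) • D 0 (Db 0 F)) := by
    ext g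
    by_cases hg : g = 0
    · subst hg
      rw [hX0, HahnSeries.C_apply, HahnSeries.coeff_single_same]
    · have h0 := hcoeff g
      rw [HahnSeries.C_apply (a := Y), HahnSeries.coeff_single_of_ne hg] at h0
      have hz : X.coeff g = 0 := HahnSeries.C_injective (by rw [h0, map_zero])
      rw [hz, HahnSeries.C_apply, HahnSeries.coeff_single_of_ne hg]
  exact ⟨hXval, hYval⟩

end
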